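/- For all integers r ≥ 4, k with 1 ≤ k ≤ r−3, and s with 1 ≤ s ≤ r−3−k, the identity Σ_{m=s+1}^{r−1−k} C(m+k, k) C(r+1, m+k+2) (−1)^{m−s} C(m−1, s) = −C(r, k+1)(r+1)/(k+2) + ( (r−k) − (k+1)s/(k+2) ) C(k+s+1, k+1) holds. -/

import Mathlib

open Finset

/-- `∑_{j ≤ n} (-1)^j C(s+n, s+j) C(s+j, s) = 0` for `n ≥ 1`. -/
lemma aux_Z (s n : ℕ) (hn : 1 ≤ n) :
    ∑ j ∈ range (n + 1), (-1 : ℚ) ^ j * ((s + n).choose (s + j)) * ((s + j).choose s) = 0 := by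
  have key : ∀ j ∈ range (n + 1),
      (-1 : ℚ) ^ j * ((s + n).choose (s + j)) * ((s + j).choose s)
        = ((s + n).choose s : ℚ) * ((-1 : ℚ) ^ j * (n.choose j)) := by
    intro j hj
    simp only [mem_range] at hj
    have h1 : s + j ≤ s + n := by omega
    have h2 : s ≤ s + j := by omega
    have tri := Nat.choose_mul (n := s + n) h2
    rw [Nat.add_sub_cancel_left, Nat.add_sub_cancel_left] at tri
    have tri' := congrArg (fun x : ℕ => (x : ℚ)) tri
    push_cast at tri'
    linear_combination ((-1 : ℚ) ^ j) * tri'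
  rw [Finset.sum_congr rfl key, ← Finset.mul_sum]
  have h0 := Int.alternating_sum_range_choose_of_ne (n := n) (by omega)
  have h0' : (∑ j ∈ range (n + 1), ((-1 : ℚ) ^ j * n.choose j)) = 0 := by
    have := congrArg (fun x : ℤ => (x : ℚ)) h0
    push_cast at this
    exact this
  rw [h0', mul_zero]

/-- `∑_{j<n} (-1)^(j+1) C(s+n, s+1+j) C(s+j, s) = -1` for `n ≥ 1`. -/
lemma aux_W (s n : ℕ) (hn : 1 ≤ n) :
    ∑ j ∈ range n, (-1 : ℚ) ^ (j + 1) * ((s + n).choose (s + 1 + j)) * ((s + j).choose s) = -1 := by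
  induction n with
  | zero => omega
  | succ n ih =>
    rcases Nat.eq_or_lt_of_le hn with h1 | h1
    · simp only [← h1]
      rw [Finset.sum_range_one]
      simp
    · have hn' : 1 ≤ n := by omega
      have pascal : ∀ j ∈ range (n + 1),
          (-1 : ℚ) ^ (j + 1) * ((s + (n + 1)).choose (s + 1 + j)) * ((s + j).choose s)
            = (-1 : ℚ) ^ (j + 1) * ((s + n).choose (s + 1 + j)) * ((s + j).choose s)
              + (-1 : ℚ) ^ (j + 1) * ((s + n).choose (s + j)) * ((s + j).choose s) := by
        intro j hj
        have h : (s + (n + 1)).choose (s + 1 + j)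
            = (s + n).choose (s + j) + (s + n).choose (s + 1 + j) := by
          rw [show s + (n + 1) = (s + n) + 1 from by ring, show s + 1 + j = (s + j) + 1 from by ring,
            Nat.choose_succ_succ]
        rw [h]
        push_cast
        ring
      rw [Finset.sum_congr rfl pascal, Finset.sum_add_distrib]
      have e1 : ∑ j ∈ range (n + 1),
          (-1 : ℚ) ^ (j + 1) * ((s + n).choose (s + 1 + j)) * ((s + j).choose s) = -1 := by
        rw [Finset.sum_range_succ, Nat.choose_eq_zero_of_lt (show s + n < s + 1 + n by omega)]
        simpa using ih hn'
      have e2 : ∑ j ∈ range (n + 1),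
          (-1 : ℚ) ^ (j + 1) * ((s + n).choose (s + j)) * ((s + j).choose s) = 0 := by
        have flip : ∀ j ∈ range (n + 1),
            (-1 : ℚ) ^ (j + 1) * ((s + n).choose (s + j)) * ((s + j).choose s)
              = -((-1 : ℚ) ^ j * ((s + n).choose (s + j)) * ((s + j).choose s)) := by
          intro j hj; ring
        rw [Finset.sum_congr rfl flip, Finset.sum_neg_distrib, aux_Z s n hn', neg_zero]
      rw [e1, e2, add_zero]

/-- V family. -/
lemma aux_V (k s n R : ℕ) (hR : R = k + s + n + 1) :
    ∑ j ∈ range (n + 1), (-1 : ℚ) ^ (j + 1) * ((s + 1 + j + k).choose k)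
        * (R.choose (s + 1 + j + k)) * ((s + j).choose s)
      = -(R.choose k : ℚ) := by
  subst hR
  have key : ∀ j ∈ range (n + 1),
      (-1 : ℚ) ^ (j + 1) * ((s + 1 + j + k).choose k)
          * ((k + s + n + 1).choose (s + 1 + j + k)) * ((s + j).choose s)
        = ((k + s + n + 1).choose k : ℚ) *
            ((-1 : ℚ) ^ (j + 1) * ((s + (n + 1)).choose (s + 1 + j)) * ((s + j).choose s)) := by
    intro j hj
    simp only [mem_range] at hj
    have h1 : s + 1 + j + k ≤ k + s + n + 1 := by omega
    have h2 : k ≤ s + 1 + j + k := by omega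
    have tri := Nat.choose_mul (n := k + s + n + 1) h2
    rw [show k + s + n + 1 - k = s + (n + 1) from by omega,
      show s + 1 + j + k - k = s + 1 + j from by omega] at tri
    have tri' := congrArg (fun x : ℕ => (x : ℚ)) tri
    push_cast at tri'
    linear_combination ((-1 : ℚ) ^ (j + 1) * (((s + j).choose s : ℚ))) * tri'
  rw [Finset.sum_congr rfl key, ← Finset.mul_sum, aux_W s (n + 1) (by omega), mul_neg_one]

/-- U family. -/
lemma aux_U (k s n R : ℕ) (hn : 1 ≤ n) (hR : R = k + s + n + 1) :
    ∑ j ∈ range n, (-1 : ℚ) ^ (j + 1) * ((s + 1 + j + k).choose k)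
        * (R.choose (s + j + k + 2)) * ((s + j).choose s)
      = -(R.choose (k + 1) : ℚ) + ((k + s + 1).choose (k + 1) : ℚ) := by
  induction n generalizing R with
  | zero => omega
  | succ n ih =>
    subst hR
    rcases Nat.eq_or_lt_of_le hn with h1 | h1
    · simp only [← h1]
      rw [Finset.sum_range_one,
        show s + 0 + k + 2 = k + s + 1 + 1 from by ring, Nat.choose_self,
        show s + 1 + 0 + k = k + s + 1 from by ring]
      simp only [Nat.add_zero, Nat.choose_self]
      have pascal := Nat.choose_succ_succ' (k + s + 1) k
      have pascal' := congrArg (fun x : ℕ => (x : ℚ)) pascal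
      push_cast at pascal' ⊢
      linear_combination pascal'
    · have hn' : 1 ≤ n := by omega
      have pascal : ∀ j ∈ range (n + 1),
          (-1 : ℚ) ^ (j + 1) * ((s + 1 + j + k).choose k)
              * ((k + s + (n + 1) + 1).choose (s + j + k + 2)) * ((s + j).choose s)
            = (-1 : ℚ) ^ (j + 1) * ((s + 1 + j + k).choose k)
                * ((k + s + n + 1).choose (s + 1 + j + k)) * ((s + j).choose s)
              + (-1 : ℚ) ^ (j + 1) * ((s + 1 + j + k).choose k)
                * ((k + s + n + 1).choose (s + j + k + 2)) * ((s + j).choose s) := by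
        intro j hj
        have h : (k + s + (n + 1) + 1).choose (s + j + k + 2)
            = (k + s + n + 1).choose (s + 1 + j + k) + (k + s + n + 1).choose (s + j + k + 2) := by
          rw [show k + s + (n + 1) + 1 = (k + s + n + 1) + 1 from by ring,
            show s + j + k + 2 = (s + 1 + j + k) + 1 from by ring, Nat.choose_succ_succ]
        rw [h]
        push_cast
        ring
      have hsplit := Finset.sum_congr rfl pascal
      rw [hsplit, Finset.sum_add_distrib]
      have hV := aux_V k s n (k + s + n + 1) rfl
      have hT2 : ∑ j ∈ range (n + 1), (-1 : ℚ) ^ (j + 1) * ((s + 1 + j + k).choose k)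
          * ((k + s + n + 1).choose (s + j + k + 2)) * ((s + j).choose s)
          = ∑ j ∈ range n, (-1 : ℚ) ^ (j + 1) * ((s + 1 + j + k).choose k)
              * ((k + s + n + 1).choose (s + j + k + 2)) * ((s + j).choose s) := by
        rw [Finset.sum_range_succ,
          Nat.choose_eq_zero_of_lt (show k + s + n + 1 < s + n + k + 2 by omega)]
        simp
      have ihh := ih (k + s + n + 1) hn' rfl
      have pascal2 : (k + s + (n + 1) + 1).choose (k + 1)
          = (k + s + n + 1).choose k + (k + s + n + 1).choose (k + 1) := by
        rw [show k + s + (n + 1) + 1 = (k + s + n + 1) + 1 from by ring, Nat.choose_succ_succ]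
      have pascal2' := congrArg (fun x : ℕ => (x : ℚ)) pascal2
      push_cast at pascal2' ⊢
      linear_combination hV + hT2 + ihh + pascal2'

/-- S family (multiplied by `k+2` to stay polynomial). -/
lemma aux_S (k s n R : ℕ) (hn : 1 ≤ n) (hR : R = k + s + n + 2) :
    ((k : ℚ) + 2) * ∑ j ∈ range n, (-1 : ℚ) ^ (j + 1) * ((s + 1 + j + k).choose k)
        * (R.choose (s + j + k + 3)) * ((s + j).choose s)
      = -((k + s + n + 1).choose (k + 1) : ℚ) * ((k : ℚ) + s + n + 2)
        + (((k : ℚ) + 2) * ((s : ℚ) + n + 1) - ((k : ℚ) + 1) * s) * ((k + s + 1).choose (k + 1) : ℚ) := by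
  induction n generalizing R with
  | zero => omega
  | succ n ih =>
    subst hR
    rcases Nat.eq_or_lt_of_le hn with h1 | h1
    · simp only [← h1]
      rw [Finset.sum_range_one,
        show s + 0 + k + 3 = k + s + 1 + 2 from by ring, Nat.choose_self,
        show s + 1 + 0 + k = k + s + 1 from by ring]
      simp only [Nat.add_zero, Nat.choose_self]
      have pascal := Nat.choose_succ_succ' (k + s + 1) k
      have ratio := Nat.choose_succ_right_eq (k + s + 1) k
      rw [show k + s + 1 - k = s + 1 from by omega] at ratio
      have pascal' := congrArg (fun x : ℕ => (x : ℚ)) pascal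
      have ratio' := congrArg (fun x : ℕ => (x : ℚ)) ratio
      push_cast at pascal' ratio' ⊢
      linear_combination ((k : ℚ) + s + 3) * pascal' - ratio'
    · have hn' : 1 ≤ n := by omega
      have pascal : ∀ j ∈ range (n + 1),
          (-1 : ℚ) ^ (j + 1) * ((s + 1 + j + k).choose k)
              * ((k + s + (n + 1) + 2).choose (s + j + k + 3)) * ((s + j).choose s)
            = (-1 : ℚ) ^ (j + 1) * ((s + 1 + j + k).choose k)
                * ((k + s + (n + 1) + 1).choose (s + j + k + 2)) * ((s + j).choose s)
              + (-1 : ℚ) ^ (j + 1) * ((s + 1 + j + k).choose k)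
                * ((k + s + (n + 1) + 1).choose (s + j + k + 3)) * ((s + j).choose s) := by
        intro j hj
        have h : (k + s + (n + 1) + 2).choose (s + j + k + 3)
            = (k + s + (n + 1) + 1).choose (s + j + k + 2)
              + (k + s + (n + 1) + 1).choose (s + j + k + 3) := by
          rw [show k + s + (n + 1) + 2 = (k + s + (n + 1) + 1) + 1 from by ring,
            show s + j + k + 3 = (s + j + k + 2) + 1 from by ring, Nat.choose_succ_succ]
        rw [h]
        push_cast
        ring
      rw [Finset.sum_congr rfl pascal, Finset.sum_add_distrib, mul_add]
      have hU := aux_U k s (n + 1) (k + s + (n + 1) + 1) (by omega) (by ring)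
      have hT2 : ∑ j ∈ range (n + 1), (-1 : ℚ) ^ (j + 1) * ((s + 1 + j + k).choose k)
          * ((k + s + (n + 1) + 1).choose (s + j + k + 3)) * ((s + j).choose s)
          = ∑ j ∈ range n, (-1 : ℚ) ^ (j + 1) * ((s + 1 + j + k).choose k)
              * ((k + s + (n + 1) + 1).choose (s + j + k + 3)) * ((s + j).choose s) := by
        rw [Finset.sum_range_succ,
          Nat.choose_eq_zero_of_lt (show k + s + (n + 1) + 1 < s + n + k + 3 by omega)]
        simp
      have ihh := ih (k + s + (n + 1) + 1) hn' (by ring)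
      have ratio := Nat.choose_mul_succ_eq (k + s + n + 1) (k + 1)
      rw [show k + s + n + 1 + 1 - (k + 1) = s + n + 1 from by omega,
        show k + s + n + 1 + 1 = k + s + (n + 1) + 1 from by ring] at ratio
      have ratio' := congrArg (fun x : ℕ => (x : ℚ)) ratio
      push_cast at ratio' ⊢
      linear_combination ((k : ℚ) + 2) * hU + ((k : ℚ) + 2) * hT2 + ihh - ratio'

theorem sum_identity_four (r k s : ℕ) (hr : 4 ≤ r) (hk1 : 1 ≤ k) (hk : k ≤ r - 3)
    (hs1 : 1 ≤ s) (hs : s ≤ r - 3 - k) :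
    (∑ m ∈ Finset.Icc (s + 1) (r - 1 - k), ((m + k).choose k : ℚ) *
        ((r + 1).choose (m + k + 2) : ℚ) * (-1 : ℚ) ^ (m - s) * ((m - 1).choose s : ℚ)) =
      -(r.choose (k + 1) : ℚ) * ((r : ℚ) + 1) / ((k : ℚ) + 2) +
        (((r : ℚ) - k) - ((k : ℚ) + 1) * s / ((k : ℚ) + 2)) * ((k + s + 1).choose (k + 1) : ℚ) := by
  have hr' : k + s + 3 ≤ r := by omega
  set n := r - 1 - k - s with hn
  have hn1 : 2 ≤ n := by omega
  have hrn : r = k + s + n + 1 := by omega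
  have lhs_eq : (∑ m ∈ Finset.Icc (s + 1) (r - 1 - k), ((m + k).choose k : ℚ) *
        ((r + 1).choose (m + k + 2) : ℚ) * (-1 : ℚ) ^ (m - s) * ((m - 1).choose s : ℚ))
      = ∑ j ∈ range n, (-1 : ℚ) ^ (j + 1) * ((s + 1 + j + k).choose k)
          * ((r + 1).choose (s + j + k + 3)) * ((s + j).choose s) := by
    rw [show Finset.Icc (s + 1) (r - 1 - k) = Finset.Ico (s + 1) (r - 1 - k + 1) from
      (Finset.Ico_add_one_right_eq_Icc _ _)]
    rw [Finset.sum_Ico_eq_sum_range, show r - 1 - k + 1 - (s + 1) = n from by omega]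
    apply Finset.sum_congr rfl
    intro j hj
    rw [show s + 1 + j + k + 2 = s + j + k + 3 from by omega,
      show s + 1 + j - s = j + 1 from by omega,
      show s + 1 + j - 1 = s + j from by omega]
    ring
  rw [lhs_eq]
  have h2 : ((k : ℚ) + 2) ≠ 0 := by positivity
  refine mul_left_cancel₀ h2 ?_
  have key := aux_S k s n (r + 1) (by omega) (by omega)
  rw [show k + s + n + 1 = r from by omega] at key
  rw [key]
  have hnr : (n : ℚ) = (r : ℚ) - k - s - 1 := by
    have hq : ((r : ℕ) : ℚ) = ((k + s + n + 1 : ℕ) : ℚ) := by rw [hrn]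
    push_cast at hq
    linarith
  rw [hnr]
  field_simp
  ring
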